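/- For every p ∈ ℝ, the function u : ℝ × ℝ → ℝ defined by u(t,x) = 2·sech²(x − p·t) satisfies the Fuchssteiner negative KdV equation ∂_x(u_{txx}/u_x) + 4·∂_x(u·u_t/u_x) + 2·u_t = 0 at every point (t,x) with x ≠ p·t (at such points u_x(t,x) ≠ 0). Hence the Fuchssteiner equation admits the solitonic solution 2·sech²(x − p·t). -/

import Mathlib

open Real

lemma cne (z : ℝ) : Real.cosh z ≠ 0 := (Real.cosh_pos z).ne'

-- base derivative lemmas at a point z
lemma hdA (z : ℝ) : HasDerivAt (fun z => 2 * (1 / Real.cosh z) ^ 2)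
    (-4 * Real.sinh z / Real.cosh z ^ 3) z := by
  have h : HasDerivAt (fun z => (2:ℝ) / Real.cosh z ^ 2)
      ((0 * Real.cosh z ^ 2 - 2 * (2 * Real.cosh z ^ 1 * Real.sinh z)) / (Real.cosh z ^ 2) ^ 2) z :=
    (hasDerivAt_const z 2).div ((Real.hasDerivAt_cosh z).pow 2) (pow_ne_zero 2 (cne z))
  have hf : (fun z => 2 * (1 / Real.cosh z) ^ 2) = fun z => (2:ℝ) / Real.cosh z ^ 2 := by
    funext y; field_simp
  rw [hf]
  convert h using 1
  field_simp; ring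

lemma hdB (p z : ℝ) : HasDerivAt (fun z => 4 * p * Real.sinh z / Real.cosh z ^ 3)
    (4 * p * (Real.cosh z ^ 2 - 3 * Real.sinh z ^ 2) / Real.cosh z ^ 4) z := by
  have h := (((Real.hasDerivAt_sinh z).const_mul (4*p)).fun_div
      ((Real.hasDerivAt_cosh z).fun_pow 3) (pow_ne_zero 3 (cne z)))
  refine h.congr_deriv ?_
  field_simp; ring

lemma hdC (p z : ℝ) : HasDerivAt (fun z => 4 * p * (Real.cosh z ^ 2 - 3 * Real.sinh z ^ 2) / Real.cosh z ^ 4)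
    (4 * p * (-8 * Real.sinh z * Real.cosh z ^ 2 + 12 * Real.sinh z ^ 3) / Real.cosh z ^ 5) z := by
  have hnum : HasDerivAt (fun z => 4 * p * (Real.cosh z ^ 2 - 3 * Real.sinh z ^ 2))
      (4 * p * (2 * Real.cosh z ^ 1 * Real.sinh z - 3 * (2 * Real.sinh z ^ 1 * Real.cosh z))) z :=
    (((Real.hasDerivAt_cosh z).fun_pow 2).sub (((Real.hasDerivAt_sinh z).fun_pow 2).const_mul 3)).const_mul (4*p)
  have h := hnum.div ((Real.hasDerivAt_cosh z).fun_pow 4) (pow_ne_zero 4 (cne z))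
  refine h.congr_deriv ?_
  field_simp; ring

lemma hdD (p z : ℝ) : HasDerivAt (fun z => -4 * p + 12 * p / Real.cosh z ^ 2)
    (-24 * p * Real.sinh z / Real.cosh z ^ 3) z := by
  have h := (((hasDerivAt_const z (12*p)).fun_div ((Real.hasDerivAt_cosh z).fun_pow 2)
      (pow_ne_zero 2 (cne z))).const_add (-4*p))
  refine h.congr_deriv ?_
  field_simp; ring

lemma hdE (p z : ℝ) : HasDerivAt (fun z => -2 * p / Real.cosh z ^ 2)
    (4 * p * Real.sinh z / Real.cosh z ^ 3) z := by
  have h := ((hasDerivAt_const z (-2*p)).fun_div ((Real.hasDerivAt_cosh z).fun_pow 2)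
      (pow_ne_zero 2 (cne z)))
  refine h.congr_deriv ?_
  field_simp; ring

lemma inner_x (a x : ℝ) : HasDerivAt (fun y : ℝ => y - a) 1 x := (hasDerivAt_id x).sub_const a

lemma inner_t (p x t : ℝ) : HasDerivAt (fun s : ℝ => x - p * s) (-p) t := by
  simpa using ((hasDerivAt_id t).const_mul p).const_sub x



/-- Partial derivative in the second (space) variable. -/
noncomputable def pdx (u : ℝ → ℝ → ℝ) : ℝ → ℝ → ℝ :=
  fun t x => deriv (fun y => u t y) x

/-- Partial derivative in the first (time) variable. -/
noncomputable def pdt (u : ℝ → ℝ → ℝ) : ℝ → ℝ → ℝ :=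
  fun t x => deriv (fun s => u s x) t

/-- The Fuchssteiner negative KdV equation
`∂_x(u_{txx}/u_x) + 4·∂_x(u·u_t/u_x) + 2·u_t = 0` at the point `(t, x)`. -/
def FuchssteinerEq (u : ℝ → ℝ → ℝ) (t x : ℝ) : Prop :=
  pdx (fun t x => pdx (pdx (pdt u)) t x / pdx u t x) t x
    + 4 * pdx (fun t x => u t x * pdt u t x / pdx u t x) t x
    + 2 * pdt u t x = 0

/-- for every `p`, the function `u(t,x) = 2·sech²(x − p·t)` satisfies the
Fuchssteiner negative KdV equation at every point with `x ≠ p·t`, where moreover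
`u_x(t,x) ≠ 0`; it is a solitonic solution. -/
theorem stmt_11 (p : ℝ) (u : ℝ → ℝ → ℝ)
    (hu : u = fun t x => 2 * (1 / Real.cosh (x - p * t)) ^ 2) :
    ∀ t x : ℝ, x ≠ p * t → pdx u t x ≠ 0 ∧ FuchssteinerEq u t x := by
  have hpdx : pdx u = fun t x => -4 * Real.sinh (x - p*t) / Real.cosh (x - p*t) ^ 3 := by
    funext t x
    have h := (hdA (x - p*t)).comp x (inner_x (p*t) x)
    rw [mul_one] at h
    rw [pdx, hu]
    exact h.deriv
  have hpdt : pdt u = fun t x => 4 * p * Real.sinh (x - p*t) / Real.cosh (x - p*t) ^ 3 := by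
    funext t x
    have h := (hdA (x - p*t)).comp t (inner_t p x t)
    rw [pdt, hu]
    have h2 : HasDerivAt (fun s => 2 * (1 / Real.cosh (x - p * s)) ^ 2)
        (4 * p * Real.sinh (x - p*t) / Real.cosh (x - p*t) ^ 3) t := by
      refine h.congr_deriv ?_; field_simp
    exact h2.deriv
  have hpdt1 : pdx (pdt u) = fun t x =>
      4 * p * (Real.cosh (x - p*t) ^ 2 - 3 * Real.sinh (x - p*t) ^ 2) / Real.cosh (x - p*t) ^ 4 := by
    funext t x
    have h := (hdB p (x - p*t)).comp x (inner_x (p*t) x)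
    rw [mul_one] at h
    rw [pdx, hpdt]
    exact h.deriv
  have hpdt2 : pdx (pdx (pdt u)) = fun t x =>
      4 * p * (-8 * Real.sinh (x - p*t) * Real.cosh (x - p*t) ^ 2 + 12 * Real.sinh (x - p*t) ^ 3)
        / Real.cosh (x - p*t) ^ 5 := by
    funext t x
    have h := (hdC p (x - p*t)).comp x (inner_x (p*t) x)
    rw [mul_one] at h
    rw [pdx, hpdt1]
    exact h.deriv
  intro t x hx
  have hs : Real.sinh (x - p*t) ≠ 0 := by
    rw [Real.sinh_ne_zero]; exact sub_ne_zero.mpr hx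
  have hux : pdx u t x ≠ 0 := by
    rw [hpdx]
    exact div_ne_zero (by simpa using hs) (pow_ne_zero 3 (cne _))
  refine ⟨hux, ?_⟩
  rw [FuchssteinerEq]
  -- eventual equality for term 1
  have hnb : ∀ᶠ y in nhds x, y ≠ p * t := by
    exact IsOpen.eventually_mem (isOpen_ne) hx
  have he1 : (fun y => pdx (pdx (pdt u)) t y / pdx u t y)
      =ᶠ[nhds x] (fun y => -4 * p + 12 * p / Real.cosh (y - p*t) ^ 2) := by
    filter_upwards [hnb] with y hy
    have hsy : Real.sinh (y - p*t) ≠ 0 := by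
      rw [Real.sinh_ne_zero]; exact sub_ne_zero.mpr hy
    have hcy := cne (y - p*t)
    have hid := Real.cosh_sq (y - p*t)
    rw [hpdt2, hpdx]
    field_simp
    linear_combination (12 * p) * hid
  have he2 : (fun y => u t y * pdt u t y / pdx u t y)
      =ᶠ[nhds x] (fun y => -2 * p / Real.cosh (y - p*t) ^ 2) := by
    filter_upwards [hnb] with y hy
    have hsy : Real.sinh (y - p*t) ≠ 0 := by
      rw [Real.sinh_ne_zero]; exact sub_ne_zero.mpr hy
    have hcy := cne (y - p*t)
    rw [hpdt, hpdx, hu]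
    field_simp
  have hd1 : pdx (fun t x => pdx (pdx (pdt u)) t x / pdx u t x) t x
      = -24 * p * Real.sinh (x - p*t) / Real.cosh (x - p*t) ^ 3 := by
    rw [pdx]
    rw [he1.deriv_eq]
    have h := (hdD p (x - p*t)).comp x (inner_x (p*t) x)
    rw [mul_one] at h
    exact h.deriv
  have hd2 : pdx (fun t x => u t x * pdt u t x / pdx u t x) t x
      = 4 * p * Real.sinh (x - p*t) / Real.cosh (x - p*t) ^ 3 := by
    rw [pdx]
    rw [he2.deriv_eq]
    have h := (hdE p (x - p*t)).comp x (inner_x (p*t) x)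
    rw [mul_one] at h
    exact h.deriv
  rw [hd1, hd2, hpdt]
  field_simp
  ring
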